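/- Let D ⊆ F = F^× × [q_1, …, q_s] be a seminormal finitely primary monoid of rank s. If s = 1, then the catenary degree satisfies c(D) ≤ 2 and D is half-factorial. -/

import Mathlib

namespace ArXivSeminormal

attribute [local instance] Classical.propDecidable

noncomputable section

/-! ### Generic factorization theory in commutative monoids -/

variable {M : Type*} [CommMonoid M]

/-- The set of factorizations of `a` (in the sense of `Z(a)`): multisets of irreducible
elements of the reduced monoid (modelled by `Associates M`) whose product is the class
of `a`. -/
def Factorizations (a : M) : Set (Multiset (Associates M)) :=
  {z | (∀ x ∈ z, Irreducible x) ∧ z.prod = Associates.mk a}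

/-- The set of lengths `L(a)` of an element `a`. -/
def lengthSet (a : M) : Set ℕ :=
  {k | ∃ z ∈ Factorizations a, Multiset.card z = k}

/-- The set of (successive) distances `Δ(L)` of a set `L ⊆ ℕ`. -/
def DeltaSet (L : Set ℕ) : Set ℕ :=
  {d | ∃ k l, k ∈ L ∧ l ∈ L ∧ k < l ∧ (∀ m, k < m → m < l → m ∉ L) ∧ d = l - k}

/-- The set of distances `Δ(H)` of a monoid `H`. -/
def DeltaMonoid (M : Type*) [CommMonoid M] : Set ℕ :=
  ⋃ a : M, DeltaSet (lengthSet a)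

/-- The distance between two factorizations:
`d(z,z') = max (card (z - gcd z z')) (card (z' - gcd z z'))`. -/
def factorDist (z z' : Multiset (Associates M)) : ℕ :=
  max (Multiset.card (z - z')) (Multiset.card (z' - z))

/-- The catenary degree `c(H)` of a monoid `H`: the smallest `N ∈ ℕ∞` such that any two
factorizations of any element are connected by a chain of factorizations with consecutive
distances at most `N`. -/
def catenaryDegree (M : Type*) [CommMonoid M] : ℕ∞ :=
  sInf {N : ℕ∞ | ∀ (a : M), ∀ z ∈ Factorizations a, ∀ z' ∈ Factorizations a,
    ∃ c : List (Multiset (Associates M)), c.head? = some z ∧ c.getLast? = some z' ∧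
      (∀ w ∈ c, w ∈ Factorizations a) ∧
      List.Chain' (fun u v => (factorDist u v : ℕ∞) ≤ N) c}

/-- A monoid is factorial if every element has a unique factorization. -/
def IsFactorialMonoid (M : Type*) [CommMonoid M] : Prop :=
  ∀ a : M, ∃! z : Multiset (Associates M), z ∈ Factorizations a

/-! ### Free commutative monoids, block monoids, Davenport constant -/

/-- The free abelian (multiplicatively written) monoid on a set `P`. -/
abbrev FreeCM (P : Type*) := Multiplicative (Multiset P)

/-- The sum homomorphism `σ : F(G) → G`. -/
def sigmaHom (G : Type*) [AddCommMonoid G] : FreeCM G →* Multiplicative G :=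
  AddMonoidHom.toMultiplicative
    { toFun := Multiset.sum
      map_zero' := Multiset.sum_zero
      map_add' := Multiset.sum_add }

/-- The monoid of zero-sum sequences over `G`. -/
def BlockMonoid (G : Type*) [AddCommMonoid G] : Submonoid (FreeCM G) :=
  MonoidHom.mker (sigmaHom G)

/-- The Davenport constant of `G`: the supremum of lengths of minimal zero-sum sequences. -/
def Davenport (G : Type*) [AddCommMonoid G] : ℕ :=
  sSup {k | ∃ u : BlockMonoid G, Irreducible u ∧
    Multiset.card (Multiplicative.toAdd (u : FreeCM G)) = k}

/-! ### Reduced seminormal finitely primary monoids -/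

/-- The `Fin s →₀ ℕ` function with all values `1`, i.e. the exponent vector of
`q_1 ⋯ q_s`. -/
def allOnes (s : ℕ) : Fin s →₀ ℕ := Finsupp.equivFunOnFinite.symm fun _ => 1

/-- The reduced seminormal finitely primary monoid of rank `s` with unit group `U` of the
complete integral closure:
`D = {ε q_1^{k_1} ⋯ q_s^{k_s} : ε ∈ U, all k_j ≥ 1} ∪ {1} ⊆ U × [q_1,…,q_s]`. -/
def seminormalD (U : Type*) [CommGroup U] (s : ℕ) :
    Submonoid (U × Multiplicative (Fin s →₀ ℕ)) where
  carrier := {x | x = 1 ∨ ∀ j, 1 ≤ Multiplicative.toAdd x.2 j}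
  one_mem' := Or.inl rfl
  mul_mem' := by
    rintro a b (rfl | ha) (rfl | hb)
    · exact Or.inl (mul_one 1)
    · rw [Set.mem_setOf_eq, one_mul]; exact Or.inr hb
    · rw [Set.mem_setOf_eq, mul_one]; exact Or.inr ha
    · refine Or.inr fun j => ?_
      have h1 := ha j
      have h2 := hb j
      have h3 : Multiplicative.toAdd ((a * b).2) j
          = Multiplicative.toAdd a.2 j + Multiplicative.toAdd b.2 j := rfl
      omega

/-! ### T-block monoids (Setting (S)) -/

/-- The monoid `T = D_1 × ⋯ × D_n`. -/
abbrev Tm {n : ℕ} (U : Fin n → Type*) [∀ i, CommGroup (U i)] (s : Fin n → ℕ) :=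
  ∀ i, ↥(seminormalD (U i) (s i))

/-- The monoid `D̂_1 × ⋯ × D̂_n`. -/
abbrev HatTm {n : ℕ} (U : Fin n → Type*) [∀ i, CommGroup (U i)] (s : Fin n → ℕ) :=
  ∀ i, U i × Multiplicative (Fin (s i) →₀ ℕ)

/-- The monoid `F = F(G) × T`. -/
abbrev Fm (G : Type*) {n : ℕ} (U : Fin n → Type*) [∀ i, CommGroup (U i)] (s : Fin n → ℕ) :=
  FreeCM G × Tm U s

/-- The homomorphism `F → G`, `S·t ↦ σ(S) + ι(t)`, whose kernel is the `T`-block monoid;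
it computes the class `[a] ∈ G ≅ q(F)/q(B)` of `a ∈ F`. -/
def TBlockPhi (G : Type*) [AddCommGroup G] {n : ℕ} (U : Fin n → Type*) [∀ i, CommGroup (U i)]
    (s : Fin n → ℕ) (iota : Tm U s →* Multiplicative G) : Fm G U s →* Multiplicative G :=
  ((sigmaHom G).comp (MonoidHom.fst _ _)) * (iota.comp (MonoidHom.snd _ _))

/-- The `T`-block monoid `B = B(G, T, ι) = {S·t ∈ F(G) × T : σ(S) + ι(t) = 0}`. -/
def TBlock (G : Type*) [AddCommGroup G] {n : ℕ} (U : Fin n → Type*) [∀ i, CommGroup (U i)]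
    (s : Fin n → ℕ) (iota : Tm U s →* Multiplicative G) : Submonoid (Fm G U s) :=
  MonoidHom.mker (TBlockPhi G U s iota)

/-- The inclusion `T = D_1 × ⋯ × D_n → D̂_1 × ⋯ × D̂_n`. -/
def embedT {n : ℕ} (U : Fin n → Type*) [∀ i, CommGroup (U i)] (s : Fin n → ℕ) :
    Tm U s →* HatTm U s :=
  Pi.monoidHom fun i => (seminormalD (U i) (s i)).subtype.comp
    (Pi.evalMonoidHom (fun j => ↥(seminormalD (U j) (s j))) i)

/-- The norm `‖A‖ = k + 2·Σ_i max L_{D_i}(a_i)` of `A = g_1⋯g_k a_1⋯a_n ∈ F`. -/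
def normF (G : Type*) {n : ℕ} (U : Fin n → Type*) [∀ i, CommGroup (U i)] (s : Fin n → ℕ)
    (A : Fm G U s) : ℕ :=
  Multiset.card (Multiplicative.toAdd A.1) + 2 * ∑ i, sSup (lengthSet (A.2 i))

/-- The class `[ε] ∈ G` of a unit `ε ∈ D̂_ν^×`. -/
def classOfUnit {G : Type*} [AddCommGroup G] {n : ℕ} (U : Fin n → Type*)
    [∀ i, CommGroup (U i)] (s : Fin n → ℕ) (iotahat : HatTm U s →* Multiplicative G)
    (ν : Fin n) (ε : U ν) : Multiplicative G :=
  iotahat (Pi.mulSingle ν (ε, 1))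

/-- The class `[q_{ν,j}] ∈ G` of the prime `q_{ν,j}` of `D̂_ν`. -/
def classOfPrime {G : Type*} [AddCommGroup G] {n : ℕ} (U : Fin n → Type*)
    [∀ i, CommGroup (U i)] (s : Fin n → ℕ) (iotahat : HatTm U s →* Multiplicative G)
    (ν : Fin n) (j : Fin (s ν)) : Multiplicative G :=
  iotahat (Pi.mulSingle ν (1, Multiplicative.ofAdd (Finsupp.single j 1)))

/-- The quantity `d_ν ∈ {-1, 0, 1, 2}` from Theorem 3.3 (for `G = {0, e}` of order two). -/
def dval {G : Type*} [AddCommGroup G] {n : ℕ} (U : Fin n → Type*) [∀ i, CommGroup (U i)]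
    (s : Fin n → ℕ) (iotahat : HatTm U s →* Multiplicative G) (e : G) (ν : Fin n) : ℤ :=
  if (∀ ε : U ν, classOfUnit U s iotahat ν ε = 1) ∧ s ν = 2 ∧
      (Finset.univ.filter fun j : Fin (s ν) =>
        classOfPrime U s iotahat ν j = Multiplicative.ofAdd e).card = 2 then 2
  else if (∀ ε : U ν, classOfUnit U s iotahat ν ε = 1) ∧ s ν = 1 then 0
  else if (∀ ε : U ν, classOfUnit U s iotahat ν ε = 1) ∧ 2 ≤ s ν ∧
      (Finset.univ.filter fun j : Fin (s ν) =>
        classOfPrime U s iotahat ν j = Multiplicative.ofAdd e).card = 0 then -1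
  else 1

/-! ### Helpers for rank one seminormal finitely primary monoids -/

section RankOneHelpers

variable {U : Type*} [CommGroup U] (D : Submonoid (U × Multiplicative (Fin 1 →₀ ℕ)))

/-- The degree (exponent of `q`) of an element of `D`. -/
def degD (x : D) : ℕ :=
  Multiplicative.toAdd (x : U × Multiplicative (Fin 1 →₀ ℕ)).2 0

lemma degD_one : degD D 1 = 0 := rfl

lemma degD_mul (x y : D) : degD D (x * y) = degD D x + degD D y := rfl

lemma degD_eq_zero_of_isUnit (x : D) (h : IsUnit x) : degD D x = 0 := by
  obtain ⟨b, hb⟩ := h.exists_right_inv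
  have h1 : degD D (x * b) = degD D x + degD D b := degD_mul D x b
  rw [hb, degD_one] at h1
  omega

/-- `degD` descends to the associates monoid. -/
def degA : Associates D → ℕ :=
  Quotient.lift (degD D) (by
    rintro x y ⟨u, hu⟩
    have h1 : degD D (x * u.val) = degD D x + degD D u.val := degD_mul D x u.val
    rw [hu] at h1
    have h2 : degD D u.val = 0 := degD_eq_zero_of_isUnit D _ u.isUnit
    omega)

lemma degA_mk (x : D) : degA D (Associates.mk x) = degD D x := rfl

lemma degA_one : degA D 1 = 0 := rfl

lemma degA_mul (s t : Associates D) : degA D (s * t) = degA D s + degA D t := by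
  obtain ⟨x, rfl⟩ := Associates.mk_surjective s
  obtain ⟨y, rfl⟩ := Associates.mk_surjective t
  rw [Associates.mk_mul_mk]
  exact degD_mul D x y

lemma degA_prod (z : Multiset (Associates D)) :
    degA D z.prod = (z.map (degA D)).sum := by
  induction z using Multiset.induction_on with
  | empty => simp [degA_one]
  | cons a s ih => simp [degA_mul, ih]

lemma isUnit_of_degD_eq_zero
    (hpr : ∀ x : D, ¬ IsUnit x → 1 ≤ degD D x) (x : D) (h : degD D x = 0) :
    IsUnit x := by
  by_contra h'
  have := hpr x h'
  omega

lemma snd_eq (x : D) :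
    (x : U × Multiplicative (Fin 1 →₀ ℕ)).2
      = Multiplicative.ofAdd (Finsupp.single 0 (degD D x)) := by
  have h : Multiplicative.toAdd (x : U × Multiplicative (Fin 1 →₀ ℕ)).2
      = Finsupp.single 0 (degD D x) := by
    apply Finsupp.ext
    intro j
    have hj : j = 0 := Subsingleton.elim j 0
    subst hj
    simp [degD]
  rw [← h]
  exact (ofAdd_toAdd _).symm

lemma irred_of_degD_one
    (hpr : ∀ x : D, ¬ IsUnit x → 1 ≤ degD D x) (x : D) (h : degD D x = 1) :
    Irreducible (Associates.mk x) := by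
  constructor
  · rw [Associates.isUnit_mk]
    intro hu
    have := degD_eq_zero_of_isUnit D x hu
    omega
  · intro a b hab
    obtain ⟨p, rfl⟩ := Associates.mk_surjective a
    obtain ⟨q, rfl⟩ := Associates.mk_surjective b
    rw [Associates.mk_mul_mk, Associates.mk_eq_mk_iff_associated] at hab
    obtain ⟨u, hu⟩ := hab
    have h1 : degD D (x * u.val) = degD D x + degD D u.val := degD_mul D x u.val
    rw [hu] at h1
    have h2 : degD D u.val = 0 := degD_eq_zero_of_isUnit D _ u.isUnit
    have h3 : degD D (p * q) = degD D p + degD D q := degD_mul D p q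
    rcases (by omega : degD D p = 0 ∨ degD D q = 0) with h0 | h0
    · exact Or.inl (Associates.isUnit_mk.mpr (isUnit_of_degD_eq_zero D hpr p h0))
    · exact Or.inr (Associates.isUnit_mk.mpr (isUnit_of_degD_eq_zero D hpr q h0))

lemma degD_one_of_irred
    (hmem : ∀ v : U × Multiplicative (Fin 1 →₀ ℕ),
      1 ≤ Multiplicative.toAdd v.2 0 → v ∈ D)
    (hpr : ∀ x : D, ¬ IsUnit x → 1 ≤ degD D x)
    (x : D) (h : Irreducible (Associates.mk x)) : degD D x = 1 := by
  have h1 : 1 ≤ degD D x := hpr x fun hu => h.not_isUnit (Associates.isUnit_mk.mpr hu)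
  by_contra hne
  have h2 : 2 ≤ degD D x := by omega
  have hy : ((x : U × Multiplicative (Fin 1 →₀ ℕ)).1,
      Multiplicative.ofAdd (Finsupp.single (0 : Fin 1) 1)) ∈ D := hmem _ (by simp)
  have hz : ((1 : U),
      Multiplicative.ofAdd (Finsupp.single (0 : Fin 1) (degD D x - 1))) ∈ D :=
    hmem _ (by
      simp only [toAdd_ofAdd, Finsupp.single_eq_same]
      omega)
  set y : D := ⟨_, hy⟩ with hy'
  set z : D := ⟨_, hz⟩ with hz'
  have hxyz : x = y * z := by
    apply Subtype.ext
    apply Prod.ext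
    · show (x : U × Multiplicative (Fin 1 →₀ ℕ)).1
        = (x : U × Multiplicative (Fin 1 →₀ ℕ)).1 * 1
      rw [mul_one]
    · show (x : U × Multiplicative (Fin 1 →₀ ℕ)).2
        = Multiplicative.ofAdd (Finsupp.single (0 : Fin 1) 1)
          * Multiplicative.ofAdd (Finsupp.single (0 : Fin 1) (degD D x - 1))
      have harith : (1 : ℕ) + (degD D x - 1) = degD D x := by omega
      rw [snd_eq D x, ← ofAdd_add, ← Finsupp.single_add, harith]
  have hmk : Associates.mk x = Associates.mk y * Associates.mk z := by
    rw [Associates.mk_mul_mk, ← hxyz]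
  rcases h.isUnit_or_isUnit hmk with hu | hu
  · have := degD_eq_zero_of_isUnit D y (Associates.isUnit_mk.mp hu)
    have hdy : degD D y = 1 := by simp [degD, hy']
    omega
  · have := degD_eq_zero_of_isUnit D z (Associates.isUnit_mk.mp hu)
    have hdz : degD D z = degD D x - 1 := by simp [degD, hz']
    omega

lemma degA_one_of_irred
    (hmem : ∀ v : U × Multiplicative (Fin 1 →₀ ℕ),
      1 ≤ Multiplicative.toAdd v.2 0 → v ∈ D)
    (hpr : ∀ x : D, ¬ IsUnit x → 1 ≤ degD D x)
    (t : Associates D) (h : Irreducible t) : degA D t = 1 := by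
  obtain ⟨x, rfl⟩ := Associates.mk_surjective t
  exact degD_one_of_irred D hmem hpr x h

lemma card_factor
    (hmem : ∀ v : U × Multiplicative (Fin 1 →₀ ℕ),
      1 ≤ Multiplicative.toAdd v.2 0 → v ∈ D)
    (hpr : ∀ x : D, ¬ IsUnit x → 1 ≤ degD D x)
    (z : Multiset (Associates D)) (h : ∀ t ∈ z, Irreducible t) :
    Multiset.card z = degA D z.prod := by
  rw [degA_prod]
  have : z.map (degA D) = Multiset.replicate (Multiset.card z) 1 := by
    rw [Multiset.eq_replicate]
    refine ⟨by simp, ?_⟩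
    intro b hb
    obtain ⟨t, ht, rfl⟩ := Multiset.mem_map.mp hb
    exact degA_one_of_irred D hmem hpr t (h t ht)
  rw [this, Multiset.sum_replicate, smul_eq_mul, mul_one]

lemma D_cancel (x p q : D) (h : x * p = x * q) : p = q := by
  have h' : (x : U × Multiplicative (Fin 1 →₀ ℕ)) * p = (x : _) * q :=
    congrArg Subtype.val h
  apply Subtype.ext
  apply Prod.ext
  · have h1 := congrArg Prod.fst h'
    exact mul_left_cancel h1
  · have h2 := congrArg Prod.snd h'
    have h3 : Multiplicative.toAdd (x : U × Multiplicative (Fin 1 →₀ ℕ)).2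
        + Multiplicative.toAdd (p : U × Multiplicative (Fin 1 →₀ ℕ)).2
        = Multiplicative.toAdd (x : U × Multiplicative (Fin 1 →₀ ℕ)).2
        + Multiplicative.toAdd (q : U × Multiplicative (Fin 1 →₀ ℕ)).2 :=
      congrArg Multiplicative.toAdd h2
    have h4 : Multiplicative.toAdd (p : U × Multiplicative (Fin 1 →₀ ℕ)).2
        = Multiplicative.toAdd (q : U × Multiplicative (Fin 1 →₀ ℕ)).2 := by
      apply Finsupp.ext
      intro j
      have h5 := congrArg (fun f => f j) h3
      simp only [Finsupp.add_apply] at h5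
      omega
    have := congrArg Multiplicative.ofAdd h4
    simpa using this

lemma assoc_cancel (t X Y : Associates D) (h : t * X = t * Y) : X = Y := by
  obtain ⟨x, rfl⟩ := Associates.mk_surjective t
  obtain ⟨p, rfl⟩ := Associates.mk_surjective X
  obtain ⟨q, rfl⟩ := Associates.mk_surjective Y
  rw [Associates.mk_mul_mk, Associates.mk_mul_mk,
    Associates.mk_eq_mk_iff_associated] at h
  obtain ⟨u, hu⟩ := h
  rw [mul_assoc] at hu
  have := D_cancel D x _ _ hu
  exact Associates.mk_eq_mk_iff_associated.mpr ⟨u, this⟩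

lemma swap_atoms
    (hmem : ∀ v : U × Multiplicative (Fin 1 →₀ ℕ),
      1 ≤ Multiplicative.toAdd v.2 0 → v ∈ D)
    (x y x' : D) (hx : degD D x = 1) (hy : degD D y = 1) (hx' : degD D x' = 1) :
    ∃ c : D, degD D c = 1 ∧ x' * c = x * y := by
  have hc : ((x : U × Multiplicative (Fin 1 →₀ ℕ)).1
      * (y : U × Multiplicative (Fin 1 →₀ ℕ)).1
      * ((x' : U × Multiplicative (Fin 1 →₀ ℕ)).1)⁻¹,
      Multiplicative.ofAdd (Finsupp.single (0 : Fin 1) 1)) ∈ D := hmem _ (by simp)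
  refine ⟨⟨_, hc⟩, by simp [degD], ?_⟩
  apply Subtype.ext
  apply Prod.ext
  · show (x' : U × Multiplicative (Fin 1 →₀ ℕ)).1
      * ((x : U × Multiplicative (Fin 1 →₀ ℕ)).1
        * (y : U × Multiplicative (Fin 1 →₀ ℕ)).1
        * ((x' : U × Multiplicative (Fin 1 →₀ ℕ)).1)⁻¹)
      = (x : U × Multiplicative (Fin 1 →₀ ℕ)).1
        * (y : U × Multiplicative (Fin 1 →₀ ℕ)).1
    rw [mul_comm, mul_assoc, inv_mul_cancel, mul_one]
  · show (x' : U × Multiplicative (Fin 1 →₀ ℕ)).2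
      * Multiplicative.ofAdd (Finsupp.single (0 : Fin 1) 1)
      = (x : U × Multiplicative (Fin 1 →₀ ℕ)).2
        * (y : U × Multiplicative (Fin 1 →₀ ℕ)).2
    rw [snd_eq D x, snd_eq D y, snd_eq D x', hx, hy, hx']

lemma dist_cons (a : Associates D) (u v : Multiset (Associates D)) :
    factorDist (a ::ₘ u) (a ::ₘ v) = factorDist u v := by
  simp [factorDist, Multiset.sub_cons, Multiset.erase_cons_head]

lemma dist_le_two (t r t' r₁ : Associates D) (w₂ : Multiset (Associates D)) :
    factorDist (t ::ₘ r ::ₘ w₂) (t' ::ₘ r₁ ::ₘ w₂) ≤ 2 := by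
  have key : ∀ a b a' b' : Associates D,
      Multiset.card ((a ::ₘ b ::ₘ w₂) - (a' ::ₘ b' ::ₘ w₂)) ≤ 2 := by
    intro a b a' b'
    have hle : (a ::ₘ b ::ₘ w₂) - (a' ::ₘ b' ::ₘ w₂) ≤ (a ::ₘ b ::ₘ 0) := by
      rw [tsub_le_iff_right]
      have h1 : (a ::ₘ b ::ₘ w₂) = (a ::ₘ b ::ₘ 0) + w₂ := by
        simp [Multiset.cons_add]
      rw [h1]
      exact (add_le_add_iff_left _).mpr ((Multiset.le_cons_self w₂ b').trans
        (Multiset.le_cons_self _ a'))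
    calc Multiset.card ((a ::ₘ b ::ₘ w₂) - (a' ::ₘ b' ::ₘ w₂))
        ≤ Multiset.card (a ::ₘ b ::ₘ 0) := Multiset.card_le_card hle
      _ = 2 := by simp
  exact max_le (key _ _ _ _) (key _ _ _ _)


lemma ofAdd_single_pow (m : ℕ) :
    (Multiplicative.ofAdd (Finsupp.single (0 : Fin 1) 1)) ^ m
      = Multiplicative.ofAdd (Finsupp.single (0 : Fin 1) m) := by
  induction m with
  | zero => simp
  | succ n ih => rw [pow_succ, ih, ← ofAdd_add, ← Finsupp.single_add]

lemma chain_exists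
    (hmem : ∀ v : U × Multiplicative (Fin 1 →₀ ℕ),
      1 ≤ Multiplicative.toAdd v.2 0 → v ∈ D)
    (hpr : ∀ x : D, ¬ IsUnit x → 1 ≤ degD D x) :
    ∀ (k : ℕ) (z z' : Multiset (Associates D)), Multiset.card z = k →
      (∀ t ∈ z, Irreducible t) → (∀ t ∈ z', Irreducible t) → z.prod = z'.prod →
      ∃ c : List (Multiset (Associates D)), c.head? = some z ∧ c.getLast? = some z' ∧
        (∀ w ∈ c, (∀ t ∈ w, Irreducible t) ∧ w.prod = z.prod) ∧
        List.Chain' (fun u v => factorDist u v ≤ 2) c := by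
  intro k
  induction k with
  | zero =>
    intro z z' hc hz hz' hp
    have hz0 : z = 0 := Multiset.card_eq_zero.mp hc
    subst hz0
    have hc' : Multiset.card z' = 0 := by
      rw [card_factor D hmem hpr z' hz', ← hp]
      simp [degA_one]
    have hz'0 : z' = 0 := Multiset.card_eq_zero.mp hc'
    subst hz'0
    refine ⟨[0], rfl, rfl, ?_, List.isChain_singleton _⟩
    intro w hw
    have hw0 : w = 0 := List.mem_singleton.mp hw
    subst hw0
    exact ⟨fun t ht => absurd ht (Multiset.notMem_zero t), rfl⟩
  | succ k ih =>
    intro z z' hc hz hz' hp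
    have hc' : Multiset.card z' = k + 1 := by
      rw [card_factor D hmem hpr z' hz', ← hp, ← card_factor D hmem hpr z hz, hc]
    obtain ⟨t, ht⟩ := Multiset.card_pos_iff_exists_mem.mp
      (by omega : 0 < Multiset.card z)
    obtain ⟨w, rfl⟩ := Multiset.exists_cons_of_mem ht
    obtain ⟨t', ht'⟩ := Multiset.card_pos_iff_exists_mem.mp
      (by omega : 0 < Multiset.card z')
    obtain ⟨w', rfl⟩ := Multiset.exists_cons_of_mem ht'
    simp only [Multiset.card_cons] at hc hc'
    rcases Nat.eq_zero_or_pos k with hk | hk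
    · subst hk
      have hw0 : w = 0 := Multiset.card_eq_zero.mp (by omega)
      have hw'0 : w' = 0 := Multiset.card_eq_zero.mp (by omega)
      subst hw0; subst hw'0
      have htt : t = t' := by simpa using hp
      subst htt
      refine ⟨[t ::ₘ 0], rfl, by simp, ?_, List.isChain_singleton _⟩
      intro w hw
      have hw0 : w = t ::ₘ 0 := List.mem_singleton.mp hw
      subst hw0
      exact ⟨hz, rfl⟩
    · obtain ⟨r, hr⟩ := Multiset.card_pos_iff_exists_mem.mp
        (by omega : 0 < Multiset.card w)
      obtain ⟨w₂, rfl⟩ := Multiset.exists_cons_of_mem hr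
      obtain ⟨x, rfl⟩ := Associates.mk_surjective t
      obtain ⟨yy, rfl⟩ := Associates.mk_surjective r
      obtain ⟨x', rfl⟩ := Associates.mk_surjective t'
      have hx1 : degD D x = 1 :=
        degD_one_of_irred D hmem hpr x (hz _ (Multiset.mem_cons_self _ _))
      have hy1 : degD D yy = 1 :=
        degD_one_of_irred D hmem hpr yy (hz _ (by simp))
      have hx'1 : degD D x' = 1 :=
        degD_one_of_irred D hmem hpr x' (hz' _ (Multiset.mem_cons_self _ _))
      obtain ⟨cc, hcc1, hcc2⟩ := swap_atoms D hmem x yy x' hx1 hy1 hx'1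
      have hr₁ : Irreducible (Associates.mk cc) := irred_of_degD_one D hpr cc hcc1
      have hkey : Associates.mk x' * Associates.mk cc
          = Associates.mk x * Associates.mk yy := by
        rw [Associates.mk_mul_mk, Associates.mk_mul_mk, hcc2]
      have hprod1 : (Associates.mk cc ::ₘ w₂).prod = w'.prod := by
        apply assoc_cancel D (Associates.mk x')
        calc Associates.mk x' * (Associates.mk cc ::ₘ w₂).prod
            = (Associates.mk x' * Associates.mk cc) * w₂.prod := by
              rw [Multiset.prod_cons, mul_assoc]
          _ = (Associates.mk x * Associates.mk yy) * w₂.prod := by rw [hkey]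
          _ = (Associates.mk x ::ₘ Associates.mk yy ::ₘ w₂).prod := by
              rw [Multiset.prod_cons, Multiset.prod_cons, mul_assoc]
          _ = (Associates.mk x' ::ₘ w').prod := hp
          _ = Associates.mk x' * w'.prod := Multiset.prod_cons _ _
      have hzirr2 : ∀ u ∈ (Associates.mk cc ::ₘ w₂), Irreducible u := by
        intro u hu
        rcases Multiset.mem_cons.mp hu with rfl | hu'
        · exact hr₁
        · exact hz u (by simp [hu'])
      have hw'irr : ∀ u ∈ w', Irreducible u := fun u hu => hz' u (by simp [hu])
      have hcard2 : Multiset.card (Associates.mk cc ::ₘ w₂) = k := by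
        simp only [Multiset.card_cons] at hc ⊢
        omega
      obtain ⟨c₀, h1, h2, h3, h4⟩ :=
        ih (Associates.mk cc ::ₘ w₂) w' hcard2 hzirr2 hw'irr hprod1
      refine ⟨(Associates.mk x ::ₘ Associates.mk yy ::ₘ w₂)
        :: c₀.map (fun v => Associates.mk x' ::ₘ v), rfl, ?_, ?_, ?_⟩
      · have hne : c₀ ≠ [] := by
          intro h0; rw [h0] at h1; simp at h1
        obtain ⟨b, l, rfl⟩ := List.exists_cons_of_ne_nil hne
        rw [List.map_cons, List.getLast?_cons_cons, ← List.map_cons,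
          List.getLast?_map, h2]
        rfl
      · intro ww hww
        rcases List.mem_cons.mp hww with rfl | hww'
        · exact ⟨hz, rfl⟩
        · obtain ⟨v, hv, rfl⟩ := List.mem_map.mp hww'
          obtain ⟨hv1, hv2⟩ := h3 v hv
          refine ⟨?_, ?_⟩
          · intro u hu
            rcases Multiset.mem_cons.mp hu with rfl | hu'
            · exact hz' _ (Multiset.mem_cons_self _ _)
            · exact hv1 u hu'
          · calc (Associates.mk x' ::ₘ v).prod
                = Associates.mk x' * v.prod := Multiset.prod_cons _ _
              _ = Associates.mk x' * (Associates.mk cc * w₂.prod) := by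
                  rw [hv2, Multiset.prod_cons]
              _ = (Associates.mk x' * Associates.mk cc) * w₂.prod :=
                  (mul_assoc _ _ _).symm
              _ = (Associates.mk x * Associates.mk yy) * w₂.prod := by rw [hkey]
              _ = (Associates.mk x ::ₘ Associates.mk yy ::ₘ w₂).prod := by
                  rw [Multiset.prod_cons, Multiset.prod_cons, mul_assoc]
      · simp only [List.Chain', List.isChain_cons]
        constructor
        · intro b hb
          simp only [List.head?_map, h1, Option.map_some, Option.mem_def,
            Option.some.injEq] at hb
          subst hb
          exact dist_le_two D _ _ _ _ _
        · rw [List.isChain_map]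
          apply h4.imp
          intro u v huv
          rw [dist_cons]
          exact huv

end RankOneHelpers


/-- Lemma 2.1(2): a seminormal finitely primary monoid of rank `s = 1` has catenary
degree at most `2` and is half-factorial. -/
theorem rank_one_seminormal_finitely_primary_halfFactorial
    {U : Type*} [CommGroup U] {s : ℕ} (hs : s = 1)
    (D : Submonoid (U × Multiplicative (Fin s →₀ ℕ)))
    (hprimary : ∀ x : D, ¬ IsUnit x →
      ∀ j, 1 ≤ Multiplicative.toAdd (x : U × Multiplicative (Fin s →₀ ℕ)).2 j)
    (hconductor : ∃ α : ℕ, 1 ≤ α ∧ ∀ y : U × Multiplicative (Fin s →₀ ℕ),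
      ((1 : U), Multiplicative.ofAdd (allOnes s)) ^ α * y ∈ D)
    (hseminormal : (D : Set (U × Multiplicative (Fin s →₀ ℕ))) =
      {x : U × Multiplicative (Fin s →₀ ℕ) | ∀ j, 1 ≤ Multiplicative.toAdd x.2 j} ∪
        {x : U × Multiplicative (Fin s →₀ ℕ) | ∃ h : x ∈ D, IsUnit (⟨x, h⟩ : D)}) :
    catenaryDegree ↥D ≤ 2 ∧ ∀ a : D, ∃ k : ℕ, lengthSet a = {k} := by
  subst hs
  have hmem : ∀ v : U × Multiplicative (Fin 1 →₀ ℕ),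
      1 ≤ Multiplicative.toAdd v.2 0 → v ∈ D := by
    intro v hv
    have hv' : v ∈ (D : Set (U × Multiplicative (Fin 1 →₀ ℕ))) := by
      rw [hseminormal]
      left
      intro j
      have hj : j = 0 := Subsingleton.elim j 0
      rw [hj]
      exact hv
    exact hv'
  have hpr : ∀ x : D, ¬ IsUnit x → 1 ≤ degD D x := fun x hx => hprimary x hx 0
  constructor
  · apply sInf_le
    simp only [Set.mem_setOf_eq]
    intro a z hz z' hz'
    obtain ⟨c, h1, h2, h3, h4⟩ := chain_exists D hmem hpr (Multiset.card z) z z'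
      rfl hz.1 hz'.1 (hz.2.trans hz'.2.symm)
    refine ⟨c, h1, h2, fun w hw => ⟨(h3 w hw).1, (h3 w hw).2.trans hz.2⟩, ?_⟩
    apply h4.imp
    intro u v huv
    exact_mod_cast huv
  · intro a
    refine ⟨degD D a, ?_⟩
    ext n
    simp only [Set.mem_singleton_iff]
    constructor
    · rintro ⟨z, ⟨hzirr, hzprod⟩, rfl⟩
      rw [card_factor D hmem hpr z hzirr, hzprod, degA_mk]
    · rintro rfl
      rcases Nat.eq_zero_or_pos (degD D a) with h0 | h0
      · refine ⟨0, ⟨fun t ht => absurd ht (Multiset.notMem_zero t), ?_⟩, by simp [h0]⟩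
        have hu : IsUnit a := isUnit_of_degD_eq_zero D hpr a h0
        rw [Multiset.prod_zero]
        exact (Associates.mk_eq_one.mpr hu).symm
      · obtain ⟨m, hm⟩ : ∃ m, degD D a = m + 1 := ⟨degD D a - 1, by omega⟩
        have hy : ((a : U × Multiplicative (Fin 1 →₀ ℕ)).1,
            Multiplicative.ofAdd (Finsupp.single (0 : Fin 1) 1)) ∈ D := hmem _ (by simp)
        have he : ((1 : U),
            Multiplicative.ofAdd (Finsupp.single (0 : Fin 1) 1)) ∈ D := hmem _ (by simp)
        have hdy : degD D (⟨_, hy⟩ : D) = 1 := by simp [degD]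
        have hde : degD D (⟨_, he⟩ : D) = 1 := by simp [degD]
        refine ⟨Associates.mk (⟨_, hy⟩ : D)
          ::ₘ Multiset.replicate m (Associates.mk (⟨_, he⟩ : D)), ⟨?_, ?_⟩, ?_⟩
        · intro t ht
          rcases Multiset.mem_cons.mp ht with rfl | ht'
          · exact irred_of_degD_one D hpr _ hdy
          · rw [Multiset.eq_of_mem_replicate ht']
            exact irred_of_degD_one D hpr _ hde
        · rw [Multiset.prod_cons, Multiset.prod_replicate, ← Associates.mk_pow,
            Associates.mk_mul_mk]
          congr 1
          apply Subtype.ext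
          have hcoe : ((((⟨_, hy⟩ : D) * (⟨_, he⟩ : D) ^ m) : D)
              : U × Multiplicative (Fin 1 →₀ ℕ))
              = ((a : U × Multiplicative (Fin 1 →₀ ℕ)).1,
                  Multiplicative.ofAdd (Finsupp.single (0 : Fin 1) 1))
                * ((1 : U), Multiplicative.ofAdd (Finsupp.single (0 : Fin 1) 1)) ^ m := by
            push_cast
            rfl
          rw [hcoe]
          apply Prod.ext
          · simp
          · show Multiplicative.ofAdd (Finsupp.single (0 : Fin 1) 1)
                * (Multiplicative.ofAdd (Finsupp.single (0 : Fin 1) 1)) ^ m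
              = (a : U × Multiplicative (Fin 1 →₀ ℕ)).2
            rw [ofAdd_single_pow, ← ofAdd_add, ← Finsupp.single_add, snd_eq D a, hm]
            rw [Nat.add_comm]
        · simp [hm]


end
end ArXivSeminormal
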